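/- Let u : ℓ²(ℕ)⊗ℓ²(ℤ) → ℓ²(ℤ)⊗ℓ²(ℤ) be the canonical isometric embedding, L = u·((q²b*b; q²)_∞)^{1/2} with b = (Σ_k q^k e_{kk})⊗S, a = (Σ_{k≥1}√(1−q^{2k})e_{k−1,k})⊗1, and v = S*⊗1 on ℓ²(ℤ)⊗ℓ²(ℤ). Then La* = v*L and La = vL(1 − b*b). -/

import Mathlib

open ContinuousLinearMap

/-- `(q²;q²)_n = ∏_{j=1}^n (1-q^{2j})`. -/
noncomputable def qPochN (q : ℝ) (n : ℕ) : ℝ := ∏ j ∈ Finset.range n, (1 - q ^ (2 * (j + 1)))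

/-- `(q²;q²)_∞ = ∏_{j≥1} (1-q^{2j})`. -/
noncomputable def qPochInf (q : ℝ) : ℝ := ∏' j : ℕ, (1 - q ^ (2 * (j + 1)))

private lemma hb_vec_ext {ι H : Type*} [NormedAddCommGroup H] [InnerProductSpace ℂ H]
    [CompleteSpace H] (e : HilbertBasis ι ℂ H) {x y : H}
    (h : ∀ i, (inner ℂ (e i) x : ℂ) = inner ℂ (e i) y) : x = y := by
  apply e.repr.injective
  apply lp.ext
  funext i
  simpa [e.repr_apply_apply] using h i

private lemma hb_clm_ext {ι H H' : Type*} [NormedAddCommGroup H] [InnerProductSpace ℂ H]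
    [CompleteSpace H] [NormedAddCommGroup H'] [InnerProductSpace ℂ H'] [CompleteSpace H']
    (e : HilbertBasis ι ℂ H) {T S : H →L[ℂ] H'}
    (h : ∀ i, T (e i) = S (e i)) : T = S := by
  refine ContinuousLinearMap.ext_on
    (Submodule.dense_iff_topologicalClosure_eq_top.mpr e.dense_span) ?_
  rintro x ⟨i, rfl⟩
  exact h i

/-- With `L(e_n⊗e_k) = ((q²;q²)_∞/(q²;q²)_n)^{1/2} e_n⊗e_k` (as a map
`ℓ²(ℕ)⊗ℓ²(ℤ) → ℓ²(ℤ)⊗ℓ²(ℤ)`), `v = S*⊗1`, and `a`, `b` the `SU_q(2)` generators,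
one has `La* = v*L` and `La = vL(1-b*b)`. -/
theorem L_commutation_relations (q : ℝ) (hq0 : 0 < q) (hq1 : q < 1)
    {H₁ H₂ : Type*} [NormedAddCommGroup H₁] [InnerProductSpace ℂ H₁] [CompleteSpace H₁]
    [NormedAddCommGroup H₂] [InnerProductSpace ℂ H₂] [CompleteSpace H₂]
    (e : HilbertBasis (ℕ × ℤ) ℂ H₁) (e₂ : HilbertBasis (ℤ × ℤ) ℂ H₂)
    (a b : H₁ →L[ℂ] H₁) (L : H₁ →L[ℂ] H₂) (v : H₂ →L[ℂ] H₂)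
    (ha0 : ∀ m : ℤ, a (e (0, m)) = 0)
    (ha : ∀ (k : ℕ) (m : ℤ), a (e (k + 1, m)) =
      ((Real.sqrt (1 - q ^ (2 * (k + 1))) : ℝ) : ℂ) • e (k, m))
    (hb : ∀ (k : ℕ) (m : ℤ), b (e (k, m)) = ((q ^ k : ℝ) : ℂ) • e (k, m + 1))
    (hL : ∀ (n : ℕ) (k : ℤ), L (e (n, k)) =
      ((Real.sqrt (qPochInf q / qPochN q n) : ℝ) : ℂ) • e₂ ((n : ℤ), k))
    (hv : ∀ m k : ℤ, v (e₂ (m, k)) = e₂ (m - 1, k)) :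
    L.comp (adjoint a) = (adjoint v).comp L ∧
    L.comp a = (v.comp L).comp (1 - adjoint b * b) := by
  have horth := orthonormal_iff_ite.mp e.orthonormal
  have horth₂ := orthonormal_iff_ite.mp e₂.orthonormal
  have hc : ∀ k : ℕ, 0 < 1 - q ^ (2 * (k + 1)) := by
    intro k
    have : q ^ (2 * (k + 1)) < 1 := pow_lt_one₀ hq0.le hq1 (by omega)
    linarith
  have hP : ∀ n, 0 < qPochN q n := fun n => Finset.prod_pos fun j _ => hc j
  have hpoch : ∀ n, qPochN q (n + 1) = qPochN q n * (1 - q ^ (2 * (n + 1))) :=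
    fun n => Finset.prod_range_succ _ n
  have hdiv : ∀ n : ℕ, (1 - q ^ (2 * (n + 1))) * (qPochInf q / qPochN q (n + 1)) =
      qPochInf q / qPochN q n := by
    intro n
    rw [hpoch n, mul_comm (qPochN q n), ← div_div, ← mul_div_assoc, ← mul_div_assoc,
      mul_div_cancel_left₀ _ (hc n).ne']
  -- adjoint of a on basis vectors
  have haA : ∀ (n : ℕ) (m : ℤ), adjoint a (e (n, m)) =
      ((Real.sqrt (1 - q ^ (2 * (n + 1))) : ℝ) : ℂ) • e (n + 1, m) := by
    intro n m
    apply hb_vec_ext e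
    rintro ⟨j, l⟩
    rw [ContinuousLinearMap.adjoint_inner_right, inner_smul_right, horth]
    cases j with
    | zero =>
      rw [ha0, inner_zero_left]
      simp [Prod.ext_iff]
    | succ j =>
      rw [ha, inner_smul_left, horth, Complex.conj_ofReal]
      simp only [Prod.mk.injEq, add_left_inj]
      by_cases h : j = n ∧ l = m
      · obtain ⟨rfl, rfl⟩ := h; simp
      · simp [h]
  -- adjoint of b on basis vectors
  have hbA : ∀ (n : ℕ) (m : ℤ), adjoint b (e (n, m)) = ((q ^ n : ℝ) : ℂ) • e (n, m - 1) := by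
    intro n m
    apply hb_vec_ext e
    rintro ⟨j, l⟩
    rw [ContinuousLinearMap.adjoint_inner_right, hb, inner_smul_left, inner_smul_right,
      horth, horth, Complex.conj_ofReal]
    simp only [Prod.mk.injEq]
    by_cases h : j = n ∧ l = m - 1
    · obtain ⟨rfl, h2⟩ := h
      have h3 : l + 1 = m := by omega
      simp [h2, h3]
    · have h' : ¬ (j = n ∧ l + 1 = m) := fun ⟨h1, h2⟩ => h ⟨h1, by omega⟩
      simp [h, h']
  -- adjoint of v on basis vectors
  have hvA : ∀ (n k : ℤ), adjoint v (e₂ (n, k)) = e₂ (n + 1, k) := by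
    intro n k
    apply hb_vec_ext e₂
    rintro ⟨j, l⟩
    rw [ContinuousLinearMap.adjoint_inner_right, hv, horth₂, horth₂]
    have : (j - 1 = n ∧ l = k) ↔ (j = n + 1 ∧ l = k) := by
      constructor <;> (rintro ⟨h1, h2⟩; exact ⟨by omega, h2⟩)
    simp only [Prod.mk.injEq, this]
  constructor
  · apply hb_clm_ext e
    rintro ⟨n, m⟩
    simp only [ContinuousLinearMap.comp_apply, haA, hvA, map_smul, hL, smul_smul]
    have key : Real.sqrt (1 - q ^ (2 * (n + 1))) * Real.sqrt (qPochInf q / qPochN q (n + 1)) =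
        Real.sqrt (qPochInf q / qPochN q n) := by
      rw [← Real.sqrt_mul (hc n).le, hdiv n]
    have hcast : ((n : ℤ) + 1) = ((n + 1 : ℕ) : ℤ) := by push_cast; ring
    rw [hcast, ← Complex.ofReal_mul, key]
  · apply hb_clm_ext e
    rintro ⟨n, m⟩
    cases n with
    | zero =>
      have h1 : (1 - adjoint b * b) (e (0, m)) = 0 := by
        rw [ContinuousLinearMap.sub_apply, ContinuousLinearMap.one_apply,
          ContinuousLinearMap.mul_apply, hb, map_smul, hbA, add_sub_cancel_right]
        norm_num
      simp only [ContinuousLinearMap.comp_apply, h1, map_zero, ha0]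
    | succ k =>
      have h1 : (1 - adjoint b * b) (e (k + 1, m)) =
          (((1 - q ^ (2 * (k + 1))) : ℝ) : ℂ) • e (k + 1, m) := by
        rw [ContinuousLinearMap.sub_apply, ContinuousLinearMap.one_apply,
          ContinuousLinearMap.mul_apply, hb, map_smul, hbA, add_sub_cancel_right, smul_smul]
        rw [show (((1 - q ^ (2 * (k + 1))) : ℝ) : ℂ) =
          1 - ((q ^ (k + 1) : ℝ) : ℂ) * ((q ^ (k + 1) : ℝ) : ℂ) by push_cast; ring]
        rw [sub_smul, one_smul]
      simp only [ContinuousLinearMap.comp_apply, h1, map_smul, ha, hL, hv, smul_smul]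
      have key : Real.sqrt (1 - q ^ (2 * (k + 1))) * Real.sqrt (qPochInf q / qPochN q k) =
          (1 - q ^ (2 * (k + 1))) * Real.sqrt (qPochInf q / qPochN q (k + 1)) := by
        rw [← hdiv k, Real.sqrt_mul (hc k).le, ← mul_assoc,
          Real.mul_self_sqrt (hc k).le]
      have hcast : ((k + 1 : ℕ) : ℤ) - 1 = (k : ℤ) := by push_cast; ring
      rw [hcast, ← Complex.ofReal_mul, ← Complex.ofReal_mul, key]
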